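/- Let p ∈ (0,1), ε > 0, 0 < δ < 1−p, β > 0 and μ ≥ 1 + ε/2. If G_{p,ε}(β,μ) = 1−p−δ/2, then tanh(β(μ−1)/2) < 1 − δ/(1−p) and consequently β < (2/ε)·ln(2(1−p)/δ). -/

import Mathlib

noncomputable def G (p ε β μ : ℝ) : ℝ :=
  1 / 2 + (1 / 2) * (p * Real.tanh (β * (μ - ε - 1) / 2) +
    (1 - p) * Real.tanh (β * (μ - 1) / 2))

lemma tanh_eq' (x : ℝ) : Real.tanh x = 1 - 2 / (Real.exp (2 * x) + 1) := by
  rw [Real.tanh_eq_sinh_div_cosh, Real.sinh_eq, Real.cosh_eq]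
  have h1 : Real.exp x > 0 := Real.exp_pos x
  have h2 : Real.exp (-x) > 0 := Real.exp_pos _
  have h3 : Real.exp (2 * x) + 1 > 0 := by positivity
  have key : Real.exp (2 * x) = Real.exp x * Real.exp x := by
    rw [← Real.exp_add]; ring_nf
  have key2 : Real.exp x * Real.exp (-x) = 1 := by
    rw [← Real.exp_add]; simp
  field_simp
  have key' : Real.exp (x * 2) = Real.exp x * Real.exp x := by rw [mul_comm]; exact key
  nlinarith [key, key', key2, h1, h2]

lemma neg_one_lt_tanh' (x : ℝ) : -1 < Real.tanh x := by
  rw [tanh_eq']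
  have h3 : Real.exp (2 * x) + 1 > 0 := by positivity
  have : 2 / (Real.exp (2 * x) + 1) < 2 := by
    rw [div_lt_iff₀ h3]
    nlinarith [Real.exp_pos (2 * x)]
  linarith

lemma tanh_mono' {x y : ℝ} (h : x ≤ y) : Real.tanh x ≤ Real.tanh y := by
  rw [tanh_eq', tanh_eq']
  have h3 : Real.exp (2 * x) + 1 > 0 := by positivity
  have h4 : Real.exp (2 * y) + 1 > 0 := by positivity
  have : Real.exp (2 * x) ≤ Real.exp (2 * y) := Real.exp_le_exp.mpr (by linarith)
  have : 2 / (Real.exp (2 * y) + 1) ≤ 2 / (Real.exp (2 * x) + 1) := by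
    apply div_le_div_of_nonneg_left (by norm_num) h3 (by linarith)
  linarith

theorem stmt_7 (p ε δ β μ : ℝ) (hp : 0 < p) (hp1 : p < 1) (hε : 0 < ε)
    (hδ0 : 0 < δ) (hδ : δ < 1 - p) (hβ : 0 < β) (hμ : 1 + ε / 2 ≤ μ)
    (hG : G p ε β μ = 1 - p - δ / 2) :
    Real.tanh (β * (μ - 1) / 2) < 1 - δ / (1 - p) ∧
    β < (2 / ε) * Real.log (2 * (1 - p) / δ) := by
  set t1 := Real.tanh (β * (μ - ε - 1) / 2) with ht1
  set t2 := Real.tanh (β * (μ - 1) / 2) with ht2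
  have hp' : (0:ℝ) < 1 - p := by linarith
  have hsum : p * t1 + (1 - p) * t2 = 1 - 2 * p - δ := by
    simp only [G] at hG; linarith
  have h1 : -1 < t1 := neg_one_lt_tanh' _
  have ht2lt : t2 < 1 - δ / (1 - p) := by
    have h : (1 - p) * t2 < 1 - p - δ := by nlinarith
    have := (div_lt_iff₀ hp').mpr (show δ < (1 - t2) * (1 - p) by nlinarith)
    linarith
  refine ⟨ht2lt, ?_⟩
  -- lower bound on t2
  have hx : β * ε / 4 ≤ β * (μ - 1) / 2 := by nlinarith
  have hlow : Real.tanh (β * ε / 4) ≤ t2 := tanh_mono' hx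
  have hform : Real.tanh (β * ε / 4) = 1 - 2 / (Real.exp (β * ε / 2) + 1) := by
    rw [tanh_eq']; ring_nf
  have hepos : (0:ℝ) < Real.exp (β * ε / 2) := Real.exp_pos _
  have hgt : 1 - 2 / Real.exp (β * ε / 2) < t2 := by
    have : 2 / (Real.exp (β * ε / 2) + 1) < 2 / Real.exp (β * ε / 2) := by
      apply div_lt_div_of_pos_left (by norm_num) hepos (by linarith)
    calc 1 - 2 / Real.exp (β * ε / 2) < 1 - 2 / (Real.exp (β * ε / 2) + 1) := by linarith
      _ ≤ t2 := by rw [hform] at hlow; exact hlow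
  have hkey : δ / (1 - p) < 2 / Real.exp (β * ε / 2) := by linarith
  have hexp : Real.exp (β * ε / 2) < 2 * (1 - p) / δ := by
    rw [div_lt_div_iff₀ hp' hepos] at hkey
    rw [lt_div_iff₀ hδ0]; nlinarith
  have hlog : β * ε / 2 < Real.log (2 * (1 - p) / δ) := by
    calc β * ε / 2 = Real.log (Real.exp (β * ε / 2)) := (Real.log_exp _).symm
      _ < _ := Real.log_lt_log hepos hexp
  calc β = (2 / ε) * (β * ε / 2) := by field_simp
    _ < (2 / ε) * Real.log (2 * (1 - p) / δ) := by
        apply mul_lt_mul_of_pos_left hlog (by positivity)
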